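/- Every finite-dimensional soluble ω-Lie algebra L over ℂ of dimension n has a proper ideal of dimension n−1; in particular, L is normal of degree 1. -/

import Mathlib

/-- An ω-Lie algebra over ℂ: a vector space with a skew-symmetric bilinear
bracket and a bilinear form ω satisfying the ω-Jacobi identity. -/
structure OmegaLie (L : Type) [AddCommGroup L] [Module ℂ L] where
  bracket : L →ₗ[ℂ] L →ₗ[ℂ] L
  omega : L →ₗ[ℂ] L →ₗ[ℂ] ℂ
  skew : ∀ x y : L, bracket x y = - bracket y x
  jacobi : ∀ x y z : L,
    bracket (bracket x y) z + bracket (bracket y z) x + bracket (bracket z x) y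
      = omega x y • z + omega y z • x + omega z x • y

namespace OmegaLie

variable {L : Type} [AddCommGroup L] [Module ℂ L]

/-- An ideal of an ω-Lie algebra. -/
def IsIdeal (A : OmegaLie L) (I : Submodule ℂ L) : Prop :=
  ∀ x ∈ I, ∀ y : L, A.bracket x y ∈ I

/-- The derived series starting from a subspace `I`. -/
def derivedFrom (A : OmegaLie L) (I : Submodule ℂ L) : ℕ → Submodule ℂ L
  | 0 => I
  | k + 1 => Submodule.span ℂ
      {w : L | ∃ a ∈ derivedFrom A I k, ∃ b ∈ derivedFrom A I k, w = A.bracket a b}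

/-- Solubility: the derived series terminates at 0. -/
def IsSoluble (A : OmegaLie L) : Prop := ∃ k, A.derivedFrom ⊤ k = ⊥

/-- A module over an ω-Lie algebra. -/
structure Mod (A : OmegaLie L) (V : Type) [AddCommGroup V] [Module ℂ V] where
  ρ : L →ₗ[ℂ] V →ₗ[ℂ] V
  compat : ∀ (x y : L) (v : V),
    ρ (A.bracket x y) v = ρ x (ρ y v) - ρ y (ρ x v) + A.omega x y • v

/-- An irreducible module: nonzero and with no nonzero proper submodules. -/
def Mod.IsIrreducible {A : OmegaLie L} {V : Type} [AddCommGroup V] [Module ℂ V]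
    (M : A.Mod V) : Prop :=
  (∃ v : V, v ≠ 0) ∧
    ∀ W : Submodule ℂ V, (∀ x : L, ∀ v ∈ W, M.ρ x v ∈ W) → W = ⊥ ∨ W = ⊤

end OmegaLie

/-- Every finite-dimensional soluble ω-Lie algebra `L` over ℂ of positive
dimension `n` has a proper ideal of dimension `n − 1`; in particular (when `n ≥ 2`) it
has a nonzero proper ideal of codimension 1, i.e. `L` is normal of degree 1. -/
theorem soluble_omegaLie_normal_degree_one
    {L : Type} [AddCommGroup L] [Module ℂ L] [FiniteDimensional ℂ L]
    (A : OmegaLie L) (hsol : A.IsSoluble) (hdim : 0 < Module.finrank ℂ L) :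
    ∃ I : Submodule ℂ L, A.IsIdeal I ∧ I ≠ ⊤ ∧
      Module.finrank ℂ I = Module.finrank ℂ L - 1 ∧
      (2 ≤ Module.finrank ℂ L → I ≠ ⊥) := by
  set D := A.derivedFrom ⊤ 1 with hDdef
  have hD : D ≠ ⊤ := by
    intro htop
    have hall : ∀ k, A.derivedFrom ⊤ k = ⊤ := by
      intro k
      induction k with
      | zero => rfl
      | succ n ih =>
        show Submodule.span ℂ _ = ⊤
        rw [ih]
        exact htop
    obtain ⟨k, hk⟩ := hsol
    rw [hall k] at hk
    have : Module.finrank ℂ L = 0 := by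
      have : Subsingleton L := by
        constructor
        intro a b
        have ha : a - b ∈ (⊥ : Submodule ℂ L) := hk ▸ Submodule.mem_top
        have := Submodule.mem_bot ℂ |>.mp ha
        linear_combination (norm := abel) this
      exact Module.finrank_zero_of_subsingleton
    omega
  obtain ⟨f, hf0, hfD⟩ := Submodule.exists_dual_map_eq_bot_of_lt_top
    (lt_top_iff_ne_top.mpr hD) inferInstance
  refine ⟨LinearMap.ker f, ?_, ?_, ?_, ?_⟩
  · intro x _ y
    have hmem : A.bracket x y ∈ D := Submodule.subset_span ⟨x, Submodule.mem_top, y,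
      Submodule.mem_top, rfl⟩
    have : f (A.bracket x y) ∈ D.map f := Submodule.mem_map_of_mem hmem
    rw [hfD] at this
    exact this
  · simpa [LinearMap.ker_eq_top] using hf0
  · have hrange : LinearMap.range f = ⊤ := by
      obtain ⟨x, hx⟩ : ∃ x, f x ≠ 0 := by
        by_contra h
        push_neg at h
        exact hf0 (LinearMap.ext fun x => h x)
      rw [eq_top_iff]
      intro c _
      exact ⟨(c / f x) • x, by rw [map_smul, smul_eq_mul]; field_simp⟩
    have := LinearMap.finrank_range_add_finrank_ker f
    rw [hrange, finrank_top] at this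
    simp only [Module.finrank_self] at this
    omega
  · intro h2 hbot
    have hker : Module.finrank ℂ (LinearMap.ker f) = Module.finrank ℂ L - 1 := by
      have hrange : LinearMap.range f = ⊤ := by
        obtain ⟨x, hx⟩ : ∃ x, f x ≠ 0 := by
          by_contra h
          push_neg at h
          exact hf0 (LinearMap.ext fun x => h x)
        rw [eq_top_iff]
        intro c _
        exact ⟨(c / f x) • x, by rw [map_smul, smul_eq_mul]; field_simp⟩
      have := LinearMap.finrank_range_add_finrank_ker f
      rw [hrange, finrank_top] at this
      simp only [Module.finrank_self] at this
      omega
    rw [hbot] at hker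
    simp [finrank_bot] at hker
    omega
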